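/- Let λ satisfy 0 < λ < 1 and let R̃ ≥ R ≥ 0. Then there exist real numbers a, b > R such that a > R̃ + λ·max(0, b − R) and b > R̃ + λ·max(0, a − R), provided R̃ is close enough to R; specifically, choosing a = b = s with s > (R̃ − λR)/(1 − λ) works whenever s > R. -/
import Mathlib


theorem csiszar_korner_ambiguous (l R R' : ℝ) (hl0 : 0 < l) (hl1 : l < 1)
    (hR : 0 ≤ R) (hRR' : R ≤ R') :
    ∃ a b : ℝ, a > R ∧ b > R ∧
      a > R' + l * max 0 (b - R) ∧ b > R' + l * max 0 (a - R) := by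
  set s := max R ((R' - l * R) / (1 - l)) + 1 with hs
  have h1l : 0 < 1 - l := by linarith
  have hsR : s > R := by
    have := le_max_left R ((R' - l * R) / (1 - l)); simp [hs]; linarith
  have hs2 : s > (R' - l * R) / (1 - l) := by
    have := le_max_right R ((R' - l * R) / (1 - l)); simp [hs]; linarith
  have key : s > R' + l * max 0 (s - R) := by
    rw [max_eq_right (by linarith : (0:ℝ) ≤ s - R)]
    have := (div_lt_iff₀ h1l).mp hs2
    nlinarith
  exact ⟨s, s, hsR, hsR, key, key⟩
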